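/- Let L ≥ K ≥ 1 and d ≥ 1 be integers, let x : [L] → ℝ^d and β ∈ ℝ^d be such that w(i) := x(i)ᵀβ ∈ [0, 1] for all i and w(1) ≥ w(2) ≥ … ≥ w(L). Let ψ̂, ρ ∈ ℝ^d and g, h : [L] → ℝ satisfy |x(i)ᵀψ̂ − x(i)ᵀβ| ≤ g(i) and |x(i)ᵀρ − x(i)ᵀψ̂| ≤ h(i) for all i ∈ [L], and suppose Σ_{k=1}^K [∏_{j=1}^{k−1} (1 − w(j))] · x(k)ᵀρ ≥ Σ_{k=1}^K [∏_{j=1}^{k−1} (1 − w(j))] · w(k). If S = (i_1, …, i_K) are distinct items with x(i_1)ᵀρ ≥ x(i_2)ᵀρ ≥ … ≥ x(i_K)ᵀρ ≥ x(j)ᵀρ for every j ∉ S, then Σ_{k=1}^K [∏_{j=1}^{k−1} (1 − w(i_j))] · (g(i_k) + h(i_k)) ≥ r(S* | w) − r(S | w), where S* = (1, …, K). -/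

import Mathlib

open Finset

/-- Lift a `Fin K`-indexed family to `ℕ` (junk value 0 beyond `K`). -/
noncomputable def liftF {K : ℕ} (F : Fin K → ℝ) : ℕ → ℝ :=
  fun n => if h : n < K then F ⟨n, h⟩ else 0

lemma liftF_lt {K : ℕ} (F : Fin K → ℝ) {n : ℕ} (h : n < K) : liftF F n = F ⟨n, h⟩ :=
  dif_pos h

/-- Telescoping identity. -/
lemma tele_aux (f : ℕ → ℝ) (n : ℕ) :
    1 - ∏ k ∈ range n, (1 - f k)
      = ∑ k ∈ range n, (∏ j ∈ range k, (1 - f j)) * f k := by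
  induction n with
  | zero => simp
  | succ n ih => rw [Finset.sum_range_succ, ← ih, Finset.prod_range_succ]; ring

lemma chain_aux (c : ℕ → ℝ) (K : ℕ) (hc : ∀ k, k + 1 < K → c (k + 1) ≤ c k) :
    ∀ m, m < K → ∀ k, k ≤ m → c m ≤ c k := by
  intro m
  induction m with
  | zero =>
      intro _ k hk
      have : k = 0 := by omega
      simp [this]
  | succ m ih =>
      intro hm k hk
      rcases Nat.eq_or_lt_of_le hk with h | h
      · exact le_of_eq (by rw [h])
      · exact le_trans (hc m hm) (ih (by omega) k (by omega))

/-- Abel-summation style nonnegativity. -/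
lemma abel_aux : ∀ (K : ℕ) (c b : ℕ → ℝ),
    (∀ k, k + 1 < K → c (k + 1) ≤ c k) → (∀ k, k < K → 0 ≤ c k) →
    (∀ m, m ≤ K → 0 ≤ ∑ k ∈ range m, b k) →
    0 ≤ ∑ k ∈ range K, c k * b k := by
  intro K
  induction K with
  | zero => simp
  | succ K ih =>
      intro c b hc hc0 hB
      have h1 : 0 ≤ ∑ k ∈ range K, (c k - c K) * b k := by
        apply ih
        · intro k hk
          have := hc k (by omega); linarith
        · intro k hk
          have := chain_aux c (K + 1) hc K (by omega) k (by omega); linarith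
        · intro m hm; exact hB m (by omega)
      have h2 : 0 ≤ c K * ∑ k ∈ range (K + 1), b k :=
        mul_nonneg (hc0 K (by omega)) (hB (K + 1) le_rfl)
      have key : ∑ k ∈ range (K + 1), c k * b k
          = (∑ k ∈ range K, (c k - c K) * b k) + c K * ∑ k ∈ range (K + 1), b k := by
        simp only [Finset.sum_range_succ, sub_mul, Finset.sum_sub_distrib, Finset.mul_sum,
          mul_add]
        ring
      linarith

/-- Any `m` distinct items have `u`-sum at most the sum of the top `m` items. -/
lemma top_sum_aux {L K : ℕ} (hK : 1 ≤ K) (u : Fin L → ℝ) (i : Fin K → Fin L)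
    (hi : Function.Injective i)
    (hsort : ∀ k l : Fin K, k ≤ l → u (i l) ≤ u (i k))
    (htop : ∀ j : Fin L, j ∉ Set.range i → u j ≤ u (i ⟨K - 1, by omega⟩)) :
    ∀ (m : ℕ), m ≤ K → ∀ T : Finset (Fin L), T.card = m →
      ∑ t ∈ T, u t ≤ ∑ k ∈ range m, liftF (fun k => u (i k)) k := by
  intro m
  induction m with
  | zero => intro _ T hT; simp [Finset.card_eq_zero.mp hT]
  | succ m ih =>
      intro hm T hT
      have hmK : m < K := by omega
      obtain ⟨t, htT, htu⟩ : ∃ t ∈ T, u t ≤ u (i ⟨m, hmK⟩) := by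
        by_cases hc : i ⟨m, hmK⟩ ∈ T
        · exact ⟨_, hc, le_rfl⟩
        · set S : Finset (Fin L) := (Finset.univ.filter (fun k : Fin K => (k : ℕ) < m)).image i
            with hS
          have hScard : S.card ≤ m := by
            have h1 : S.card = (Finset.univ.filter (fun k : Fin K => (k : ℕ) < m)).card :=
              Finset.card_image_of_injective _ hi
            have h2 : ((Finset.univ.filter (fun k : Fin K => (k : ℕ) < m)).image Fin.val)
                ⊆ range m := by
              intro n hn
              simp only [Finset.mem_image, Finset.mem_filter, Finset.mem_univ, true_and] at hn
              obtain ⟨k, hk, rfl⟩ := hn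
              simpa using hk
            have h3 := Finset.card_le_card h2
            rw [Finset.card_image_of_injective _ Fin.val_injective, Finset.card_range] at h3
            omega
          have hns : ¬ T ⊆ S := by
            intro hsub
            have := Finset.card_le_card hsub
            omega
          obtain ⟨t, htT, htS⟩ := Finset.not_subset.mp hns
          refine ⟨t, htT, ?_⟩
          by_cases hr : t ∈ Set.range i
          · obtain ⟨l, rfl⟩ := hr
            have hlm : m ≤ (l : ℕ) := by
              by_contra hlt
              exact htS (Finset.mem_image.mpr ⟨l, by simp [Finset.mem_filter]; omega, rfl⟩)
            exact hsort ⟨m, hmK⟩ l (by simpa [Fin.le_def] using hlm)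
          · exact le_trans (htop t hr) (hsort ⟨m, hmK⟩ ⟨K - 1, by omega⟩ (by simp [Fin.le_def]; omega))
      have hsplit : ∑ s ∈ T, u s = u t + ∑ s ∈ T.erase t, u s :=
        (Finset.add_sum_erase _ _ htT).symm
      have hcard : (T.erase t).card = m := by
        rw [Finset.card_erase_of_mem htT, hT]
        omega
      have hIH := ih (by omega) (T.erase t) hcard
      rw [Finset.sum_range_succ]
      have hlift : liftF (fun k : Fin K => u (i k)) m = u (i ⟨m, hmK⟩) := liftF_lt _ hmK
      rw [hlift]
      linarith

/-- For a nonneg monotone `f`, the product over the `m` smallest indices is the least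
product over any `m` distinct items. -/
lemma bottom_prod_aux {L : ℕ} (f : Fin L → ℝ) (hf0 : ∀ j, 0 ≤ f j)
    (hfmono : ∀ a b : Fin L, a ≤ b → f a ≤ f b) :
    ∀ (m : ℕ) (T : Finset (Fin L)), T.card = m →
      ∏ k ∈ range m, liftF f k ≤ ∏ t ∈ T, f t := by
  intro m
  induction m with
  | zero => intro T hT; simp [Finset.card_eq_zero.mp hT]
  | succ m ih =>
      intro T hT
      obtain ⟨t, htT, htm⟩ : ∃ t ∈ T, m ≤ (t : ℕ) := by
        by_contra hcon
        push_neg at hcon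
        have hsub : T.image Fin.val ⊆ range m := by
          intro n hn
          simp only [Finset.mem_image] at hn
          obtain ⟨s, hs, rfl⟩ := hn
          exact Finset.mem_range.mpr (hcon s hs)
        have := Finset.card_le_card hsub
        rw [Finset.card_image_of_injective _ Fin.val_injective, Finset.card_range, hT] at this
        omega
      have hmL : m < L := lt_of_le_of_lt htm t.isLt
      have hsplit : ∏ s ∈ T, f s = f t * ∏ s ∈ T.erase t, f s :=
        (Finset.mul_prod_erase _ _ htT).symm
      have hcard : (T.erase t).card = m := by
        rw [Finset.card_erase_of_mem htT, hT]
        omega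
      have hIH := ih (T.erase t) hcard
      rw [Finset.prod_range_succ, hsplit, mul_comm (f t)]
      have hlift : liftF f m = f ⟨m, hmL⟩ := liftF_lt _ hmL
      rw [hlift]
      have hnonneg : 0 ≤ ∏ k ∈ range m, liftF f k := by
        apply Finset.prod_nonneg
        intro k _
        by_cases hk : k < L
        · rw [liftF_lt _ hk]; exact hf0 _
        · simp [liftF, hk]
      exact mul_le_mul hIH (hfmono ⟨m, hmL⟩ t (by simpa [Fin.le_def] using htm))
        (hf0 _) (Finset.prod_nonneg fun s _ => hf0 s)
/-- Linear-cascading analogue of Lemma transfer-one. Items are `Fin L` with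
feature vectors `x i ∈ ℝ^d`, weights `w i = x(i)ᵀ β ∈ [0,1]` nonincreasing; `S* = (0, …, K-1)`.
If `|x(i)ᵀψ̂ - x(i)ᵀβ| ≤ g i`, `|x(i)ᵀρ - x(i)ᵀψ̂| ≤ h i`, the weighted crucial inequality holds
for the top `K` items, and `S = (i 0, …, i (K-1))` is the greedy list ordered by `x(·)ᵀρ`, then
`∑_k [∏_{j<k} (1 - w(i_j))] (g(i_k) + h(i_k)) ≥ r(S*|w) - r(S|w)`. -/
theorem stmt_16 (L K d : ℕ) (hK : 1 ≤ K) (hKL : K ≤ L) (hd : 1 ≤ d)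
    (x : Fin L → Fin d → ℝ) (β : Fin d → ℝ)
    (w : Fin L → ℝ) (hw : ∀ i, w i = dotProduct (x i) β)
    (hw01 : ∀ i, 0 ≤ w i ∧ w i ≤ 1)
    (hmono : ∀ a b : Fin L, a ≤ b → w b ≤ w a)
    (ψ ρ : Fin d → ℝ) (g h : Fin L → ℝ)
    (hg : ∀ i, |dotProduct (x i) ψ - dotProduct (x i) β| ≤ g i)
    (hh : ∀ i, |dotProduct (x i) ρ - dotProduct (x i) ψ| ≤ h i)
    (hcrucial :
      ∑ k : Fin K, (∏ j ∈ Finset.Iio k, (1 - w (Fin.castLE hKL j))) * w (Fin.castLE hKL k)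
      ≤ ∑ k : Fin K, (∏ j ∈ Finset.Iio k, (1 - w (Fin.castLE hKL j)))
          * dotProduct (x (Fin.castLE hKL k)) ρ)
    (i : Fin K → Fin L) (hi : Function.Injective i)
    (hsort : ∀ k l : Fin K, k ≤ l →
      dotProduct (x (i l)) ρ ≤ dotProduct (x (i k)) ρ)
    (htop : ∀ j : Fin L, j ∉ Set.range i →
      dotProduct (x j) ρ ≤ dotProduct (x (i ⟨K - 1, by omega⟩)) ρ) :
    (1 - ∏ k : Fin K, (1 - w (Fin.castLE hKL k))) - (1 - ∏ k : Fin K, (1 - w (i k)))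
      ≤ ∑ k : Fin K, (∏ j ∈ Finset.Iio k, (1 - w (i j))) * (g (i k) + h (i k)) := by
  have hL : 1 ≤ L := le_trans hK hKL
  set u : Fin L → ℝ := fun j => dotProduct (x j) ρ with hu
  -- ℕ-indexed families
  set A : ℕ → ℝ := liftF (fun k : Fin K => w (Fin.castLE hKL k)) with hA
  set B : ℕ → ℝ := liftF (fun k : Fin K => w (i k)) with hB
  set U : ℕ → ℝ := liftF (fun k : Fin K => u (i k)) with hU
  set Ut : ℕ → ℝ := liftF (fun k : Fin K => u (Fin.castLE hKL k)) with hUt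
  set GH : ℕ → ℝ := liftF (fun k : Fin K => g (i k) + h (i k)) with hGH
  set Ps : ℕ → ℝ := fun n => ∏ j ∈ Finset.range n, (1 - A j) with hPsd
  set Pb : ℕ → ℝ := fun n => ∏ j ∈ Finset.range n, (1 - B j) with hPbd
  -- conversions of Fin-indexed products over Iio to ℕ products over range
  have hPsk : ∀ k : Fin K,
      ∏ j ∈ Finset.Iio k, (1 - w (Fin.castLE hKL j)) = Ps (k : ℕ) := by
    intro k
    simp only [hPsd]
    rw [← Nat.Iio_eq_range, ← Fin.map_valEmbedding_Iio, Finset.prod_map]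
    refine Finset.prod_congr rfl fun j _ => ?_
    rw [hA]
    simp [liftF_lt _ j.isLt]
  have hPbk : ∀ k : Fin K,
      ∏ j ∈ Finset.Iio k, (1 - w (i j)) = Pb (k : ℕ) := by
    intro k
    simp only [hPbd]
    rw [← Nat.Iio_eq_range, ← Fin.map_valEmbedding_Iio, Finset.prod_map]
    refine Finset.prod_congr rfl fun j _ => ?_
    rw [hB]
    simp [liftF_lt _ j.isLt]
  -- pointwise facts
  have hA01 : ∀ n, n < K → 0 ≤ A n ∧ A n ≤ 1 := by
    intro n hn; rw [hA, liftF_lt _ hn]; exact hw01 _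
  have hB01 : ∀ n, n < K → 0 ≤ B n ∧ B n ≤ 1 := by
    intro n hn; rw [hB, liftF_lt _ hn]; exact hw01 _
  have htri : ∀ j : Fin L, u j - w j ≤ g j + h j := by
    intro j
    have h1 := hg j
    have h2 := hh j
    have := abs_le.mp h1
    have := abs_le.mp h2
    rw [hw j, hu]
    simp only []
    linarith [ (abs_le.mp h1).1, (abs_le.mp h1).2, (abs_le.mp h2).1, (abs_le.mp h2).2 ]
  have hGH0 : ∀ n, n < K → 0 ≤ GH n := by
    intro n hn
    rw [hGH, liftF_lt _ hn]
    have h1 := abs_nonneg (dotProduct (x (i ⟨n, hn⟩)) ψ - dotProduct (x (i ⟨n, hn⟩)) β)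
    have h2 := abs_nonneg (dotProduct (x (i ⟨n, hn⟩)) ρ - dotProduct (x (i ⟨n, hn⟩)) ψ)
    have := hg (i ⟨n, hn⟩); have := hh (i ⟨n, hn⟩)
    linarith
  have hUB : ∀ n, n < K → U n - B n ≤ GH n := by
    intro n hn
    rw [hU, hB, hGH, liftF_lt _ hn, liftF_lt _ hn, liftF_lt _ hn]
    exact htri (i ⟨n, hn⟩)
  -- properties of the prefix products
  have hPs0 : ∀ n, n ≤ K → 0 ≤ Ps n := by
    intro n hn
    rw [hPsd]
    apply Finset.prod_nonneg
    intro j hj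
    have := hA01 j (lt_of_lt_of_le (Finset.mem_range.mp hj) hn)
    linarith [this.2]
  have hPb0 : ∀ n, n ≤ K → 0 ≤ Pb n := by
    intro n hn
    rw [hPbd]
    apply Finset.prod_nonneg
    intro j hj
    have := hB01 j (lt_of_lt_of_le (Finset.mem_range.mp hj) hn)
    linarith [this.2]
  have hPsmono : ∀ n, n + 1 ≤ K → Ps (n + 1) ≤ Ps n := by
    intro n hn
    have hstep : Ps (n + 1) = Ps n * (1 - A n) := by
      rw [hPsd]; exact Finset.prod_range_succ _ n
    have h1 := hPs0 n (by omega)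
    have h2 := (hA01 n (by omega)).1
    nlinarith
  -- Ps ≤ Pb : the top-k indices minimize the product of (1 - w)
  have hPsPb : ∀ n, n ≤ K → Ps n ≤ Pb n := by
    intro n hn
    set f : Fin L → ℝ := fun j => 1 - w j with hf
    have hf0 : ∀ j, 0 ≤ f j := by intro j; rw [hf]; simp only []; linarith [(hw01 j).2]
    have hfmono : ∀ a b : Fin L, a ≤ b → f a ≤ f b := by
      intro a b hab; rw [hf]; simp only []; linarith [hmono a b hab]
    set If : ℕ → Fin L := fun p => i ⟨min p (K - 1), by omega⟩ with hIf
    have hIfeq : ∀ p (hp : p < n), If p = i ⟨p, by omega⟩ := by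
      intro p hp
      simp only [hIf]
      congr 1
      exact Fin.ext (by simp only [Fin.val_mk]; omega)
    have hinj : Set.InjOn If (Finset.range n) := by
      intro a ha b hb hab
      simp only [Finset.coe_range, Set.mem_Iio] at ha hb
      rw [hIfeq a ha, hIfeq b hb] at hab
      simpa using congrArg Fin.val (hi hab)
    set T : Finset (Fin L) := (Finset.range n).image If with hT
    have hTcard : T.card = n := by
      rw [hT, Finset.card_image_of_injOn hinj, Finset.card_range]
    have hbp := bottom_prod_aux f hf0 hfmono n T hTcard
    have hlhs : ∏ k ∈ Finset.range n, liftF f k = Ps n := by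
      rw [hPsd]
      refine Finset.prod_congr rfl fun k hk => ?_
      have hkn : k < n := Finset.mem_range.mp hk
      have hkL : k < L := by omega
      rw [liftF_lt _ hkL, hA, liftF_lt _ (by omega : k < K), hf]
      rfl
    have hrhs : ∏ t ∈ T, f t = Pb n := by
      rw [hT, Finset.prod_image hinj, hPbd]
      refine Finset.prod_congr rfl fun p hp => ?_
      have hpn : p < n := Finset.mem_range.mp hp
      rw [hIfeq p hpn, hf, hB, liftF_lt _ (by omega : p < K)]
    rw [← hlhs, ← hrhs]
    exact hbp
  -- crucial inequality in ℕ form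
  have hcru : ∑ n ∈ Finset.range K, Ps n * A n ≤ ∑ n ∈ Finset.range K, Ps n * Ut n := by
    have e1 : ∑ k : Fin K, (∏ j ∈ Finset.Iio k, (1 - w (Fin.castLE hKL j))) * w (Fin.castLE hKL k)
        = ∑ n ∈ Finset.range K, Ps n * A n := by
      rw [← Fin.sum_univ_eq_sum_range (fun n => Ps n * A n) K]
      refine Finset.sum_congr rfl fun k _ => ?_
      rw [hPsk k, hA, liftF_lt _ k.isLt]
    have e2 : ∑ k : Fin K, (∏ j ∈ Finset.Iio k, (1 - w (Fin.castLE hKL j)))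
          * dotProduct (x (Fin.castLE hKL k)) ρ
        = ∑ n ∈ Finset.range K, Ps n * Ut n := by
      rw [← Fin.sum_univ_eq_sum_range (fun n => Ps n * Ut n) K]
      refine Finset.sum_congr rfl fun k _ => ?_
      rw [hPsk k, hUt, liftF_lt _ k.isLt]
    rw [← e1, ← e2]
    exact hcrucial
  -- Abel step : ∑ Ps Ut ≤ ∑ Ps U
  have habel : ∑ n ∈ Finset.range K, Ps n * Ut n ≤ ∑ n ∈ Finset.range K, Ps n * U n := by
    have key : 0 ≤ ∑ n ∈ Finset.range K, Ps n * (U n - Ut n) := by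
      apply abel_aux K Ps (fun n => U n - Ut n)
      · intro k hk; exact hPsmono k (by omega)
      · intro k hk; exact hPs0 k (le_of_lt hk)
      · intro m hm
        rw [Finset.sum_sub_distrib]
        have hsu : ∀ k l : Fin K, k ≤ l → u (i l) ≤ u (i k) := by
          intro k l hkl; exact hsort k l hkl
        have hto : ∀ j : Fin L, j ∉ Set.range i → u j ≤ u (i ⟨K - 1, by omega⟩) := by
          intro j hj; exact htop j hj
        set Jf : ℕ → Fin L := fun p => Fin.castLE hKL ⟨min p (K - 1), by omega⟩ with hJf
        have hJfeq : ∀ p (hp : p < m), Jf p = Fin.castLE hKL ⟨p, by omega⟩ := by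
          intro p hp
          simp only [hJf]
          congr 1
          exact Fin.ext (by simp only [Fin.val_mk]; omega)
        have hinj : Set.InjOn Jf (Finset.range m) := by
          intro a ha b hb hab
          simp only [Finset.coe_range, Set.mem_Iio] at ha hb
          rw [hJfeq a ha, hJfeq b hb] at hab
          have := congrArg Fin.val hab
          simpa [Fin.castLE] using this
        set T : Finset (Fin L) := (Finset.range m).image Jf with hT
        have hTcard : T.card = m := by
          rw [hT, Finset.card_image_of_injOn hinj, Finset.card_range]
        have hts := top_sum_aux hK u i hi hsu hto m hm T hTcard
        have hlhs : ∑ t ∈ T, u t = ∑ n ∈ Finset.range m, Ut n := by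
          rw [hT, Finset.sum_image hinj]
          refine Finset.sum_congr rfl fun p hp => ?_
          have hpm : p < m := Finset.mem_range.mp hp
          rw [hJfeq p hpm, hUt, liftF_lt _ (by omega : p < K)]
        have hrhs : ∑ k ∈ Finset.range m, liftF (fun k => u (i k)) k
            = ∑ n ∈ Finset.range m, U n := by
          refine Finset.sum_congr rfl fun p hp => ?_
          rw [hU]
        rw [hlhs, hrhs] at hts
        linarith
    have expand : ∑ n ∈ Finset.range K, Ps n * (U n - Ut n)
        = ∑ n ∈ Finset.range K, Ps n * U n - ∑ n ∈ Finset.range K, Ps n * Ut n := by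
      rw [← Finset.sum_sub_distrib]
      exact Finset.sum_congr rfl fun n _ => by ring
    linarith [key, expand ▸ key]
  -- ∑ Ps B ≤ ∑ Pb B
  have hPsB : ∑ n ∈ Finset.range K, Ps n * B n ≤ ∑ n ∈ Finset.range K, Pb n * B n := by
    refine Finset.sum_le_sum fun n hn => ?_
    have hnK : n < K := Finset.mem_range.mp hn
    exact mul_le_mul_of_nonneg_right (hPsPb n (le_of_lt hnK)) (hB01 n hnK).1
  -- ∑ Ps U − ∑ Ps B ≤ ∑ Ps GH
  have hmid : ∑ n ∈ Finset.range K, Ps n * U n - ∑ n ∈ Finset.range K, Ps n * B n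
      ≤ ∑ n ∈ Finset.range K, Ps n * GH n := by
    rw [← Finset.sum_sub_distrib]
    refine Finset.sum_le_sum fun n hn => ?_
    have hnK : n < K := Finset.mem_range.mp hn
    have h1 : Ps n * U n - Ps n * B n = Ps n * (U n - B n) := by ring
    rw [h1]
    exact mul_le_mul_of_nonneg_left (hUB n hnK) (hPs0 n (le_of_lt hnK))
  -- ∑ Ps GH ≤ ∑ Pb GH
  have hlast : ∑ n ∈ Finset.range K, Ps n * GH n ≤ ∑ n ∈ Finset.range K, Pb n * GH n := by
    refine Finset.sum_le_sum fun n hn => ?_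
    have hnK : n < K := Finset.mem_range.mp hn
    exact mul_le_mul_of_nonneg_right (hPsPb n (le_of_lt hnK)) (hGH0 n hnK)
  -- telescoping identities
  have t1 : 1 - ∏ k : Fin K, (1 - w (Fin.castLE hKL k)) = ∑ n ∈ Finset.range K, Ps n * A n := by
    have e : ∏ k : Fin K, (1 - w (Fin.castLE hKL k)) = ∏ n ∈ Finset.range K, (1 - A n) := by
      rw [← Fin.prod_univ_eq_prod_range (fun n => 1 - A n) K]
      refine Finset.prod_congr rfl fun k _ => ?_
      rw [hA, liftF_lt _ k.isLt]
    rw [e]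
    have := tele_aux A K
    rw [this]
  have t2 : 1 - ∏ k : Fin K, (1 - w (i k)) = ∑ n ∈ Finset.range K, Pb n * B n := by
    have e : ∏ k : Fin K, (1 - w (i k)) = ∏ n ∈ Finset.range K, (1 - B n) := by
      rw [← Fin.prod_univ_eq_prod_range (fun n => 1 - B n) K]
      refine Finset.prod_congr rfl fun k _ => ?_
      rw [hB, liftF_lt _ k.isLt]
    rw [e]
    have := tele_aux B K
    rw [this]
  have t3 : ∑ k : Fin K, (∏ j ∈ Finset.Iio k, (1 - w (i j))) * (g (i k) + h (i k))
      = ∑ n ∈ Finset.range K, Pb n * GH n := by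
    rw [← Fin.sum_univ_eq_sum_range (fun n => Pb n * GH n) K]
    refine Finset.sum_congr rfl fun k _ => ?_
    rw [hPbk k, hGH, liftF_lt _ k.isLt]
  rw [t1, t2, t3]
  linarith
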